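/- Let A be a finite nonempty set of points in ℝ², let η > 0, and let p₁, p₂ ∈ A satisfy ‖p₁ − p₂‖ < η/2. Then in every optimal partition of (A, η), the points p₁ and p₂ lie in the same cluster. -/

import Mathlib

noncomputable section

/-- The Euclidean plane. -/
abbrev Plane := EuclideanSpace ℝ (Fin 2)

/-- Perimeter of a bounded set via Cauchy's formula. -/
noncomputable def perim (C : Set Plane) : ℝ :=
  ∫ θ in (0:ℝ)..(2 * Real.pi),
    sSup ((fun p : Plane => p 0 * Real.cos θ + p 1 * Real.sin θ) '' C)

/-- `P` is a partition of `A` into nonempty clusters. -/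
def IsPartition (A : Set Plane) (P : Finset (Set Plane)) : Prop :=
  (∀ C ∈ P, (C : Set Plane).Nonempty) ∧
  (⋃₀ (P : Set (Set Plane)) = A) ∧
  ((P : Set (Set Plane)).PairwiseDisjoint id)

/-- Cost of a partition with opening cost `η` per cluster. -/
noncomputable def cost (η : ℝ) (P : Finset (Set Plane)) : ℝ :=
  η * P.card + ∑ C ∈ P, perim C

/-- `P` is an optimal partition for `(A, η)`. -/
def IsOptimalPartition (η : ℝ) (A : Set Plane) (P : Finset (Set Plane)) : Prop :=
  IsPartition A P ∧ ∀ Q : Finset (Set Plane), IsPartition A Q → cost η P ≤ cost η Q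

/-- `A` is indivisible for `η`: the one-block partition `{A}` is optimal. -/
def Indivisible (η : ℝ) (A : Set Plane) : Prop :=
  IsOptimalPartition η A {A}

/-- A maximal optimal partition of `(A, η)`. -/
def IsMaximalOptimal (η : ℝ) (A : Set Plane) (P : Finset (Set Plane)) : Prop :=
  IsOptimalPartition η A P ∧
  ¬ ∃ Q : Finset (Set Plane), IsOptimalPartition η A Q ∧ Q.card < P.card ∧
      ∀ C ∈ P, ∃ C' ∈ Q, C ⊆ C'

/-- support-ish function of a point -/
def sf (p : Plane) (θ : ℝ) : ℝ := p 0 * Real.cos θ + p 1 * Real.sin θ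

lemma sf_cont (p : Plane) : Continuous (sf p) := by
  unfold sf; fun_prop

/-- support function of a set -/
def supf (C : Set Plane) (θ : ℝ) : ℝ := sSup ((fun p : Plane => sf p θ) '' C)

lemma perim_eq (C : Set Plane) : perim C = ∫ θ in (0:ℝ)..(2 * Real.pi), supf C θ := rfl

lemma supf_continuous {C : Set Plane} (hC : C.Finite) (hne : C.Nonempty) :
    Continuous (supf C) := by
  have hfne : hC.toFinset.Nonempty := by simpa [Set.Finite.toFinset_nonempty] using hne
  have : supf C = fun θ => hC.toFinset.sup' hfne (fun p => sf p θ) := by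
    funext θ
    rw [Finset.sup'_eq_csSup_image]
    simp [supf, Set.Finite.coe_toFinset]
  rw [this]
  exact Continuous.finset_sup'_apply hfne fun p _ => sf_cont p

lemma le_supf {C : Set Plane} (hC : C.Finite) {p : Plane} (hp : p ∈ C) (θ : ℝ) :
    sf p θ ≤ supf C θ :=
  le_csSup ((hC.image _).bddAbove) (Set.mem_image_of_mem _ hp)

lemma integral_sf (p : Plane) : (∫ θ in (0:ℝ)..(2 * Real.pi), sf p θ) = 0 := by
  unfold sf
  rw [intervalIntegral.integral_add ((by fun_prop : Continuous fun θ => p 0 * Real.cos θ).intervalIntegrable _ _) ((by fun_prop : Continuous fun θ => p 1 * Real.sin θ).intervalIntegrable _ _)]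
  rw [intervalIntegral.integral_const_mul, intervalIntegral.integral_const_mul,
    integral_cos, integral_sin]
  simp [Real.sin_two_pi, Real.cos_two_pi]

lemma integral_max_cos (a b : ℝ) :
    (∫ θ in (0:ℝ)..(2 * Real.pi), max 0 (a * Real.cos θ + b * Real.sin θ))
      = 2 * Real.sqrt (a ^ 2 + b ^ 2) := by
  rcases eq_or_ne (a ^ 2 + b ^ 2) 0 with h0 | h0
  · have ha : a = 0 := by nlinarith
    have hb : b = 0 := by nlinarith
    simp [ha, hb]
  set r := Real.sqrt (a ^ 2 + b ^ 2) with hr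
  have hr0 : 0 ≤ r := Real.sqrt_nonneg _
  -- the generic integral of max 0 (r cos x) over a full period
  have key : ∀ c : ℝ, (∫ θ in c..(c + 2 * Real.pi), max 0 (r * Real.cos θ)) = 2 * r := by
    intro c
    have hper : Function.Periodic (fun x => max 0 (r * Real.cos x)) (2 * Real.pi) := by
      intro x; simp [Real.cos_add_two_pi]
    have hint : ∀ u v : ℝ, IntervalIntegrable (fun x => max 0 (r * Real.cos x)) MeasureTheory.volume u v := by
      intro u v
      exact ((continuous_const.max (by fun_prop)).intervalIntegrable u v)
    rw [hper.intervalIntegral_add_eq c 0, zero_add]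
    have hpi := Real.pi_pos
    have hsplit1 : (∫ θ in (0:ℝ)..(Real.pi/2), max 0 (r * Real.cos θ)) = r := by
      have : (∫ θ in (0:ℝ)..(Real.pi/2), max 0 (r * Real.cos θ))
          = ∫ θ in (0:ℝ)..(Real.pi/2), r * Real.cos θ := by
        apply intervalIntegral.integral_congr
        intro x hx
        rw [Set.uIcc_of_le (by linarith)] at hx
        have : 0 ≤ Real.cos x := Real.cos_nonneg_of_mem_Icc ⟨by linarith [hx.1], hx.2⟩
        exact max_eq_right (mul_nonneg hr0 this)
      rw [this, intervalIntegral.integral_const_mul, integral_cos]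
      simp
    have hsplit2 : (∫ θ in (Real.pi/2)..(3 * Real.pi / 2), max 0 (r * Real.cos θ)) = 0 := by
      have : (∫ θ in (Real.pi/2)..(3 * Real.pi / 2), max 0 (r * Real.cos θ))
          = ∫ θ in (Real.pi/2)..(3 * Real.pi / 2), (0:ℝ) := by
        apply intervalIntegral.integral_congr
        intro x hx
        rw [Set.uIcc_of_le (by linarith)] at hx
        have : Real.cos x ≤ 0 :=
          Real.cos_nonpos_of_pi_div_two_le_of_le hx.1 (by linarith [hx.2])
        exact max_eq_left (mul_nonpos_of_nonneg_of_nonpos hr0 this)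
      rw [this]; simp
    have hsplit3 : (∫ θ in (3 * Real.pi / 2)..(2 * Real.pi), max 0 (r * Real.cos θ)) = r := by
      have : (∫ θ in (3 * Real.pi / 2)..(2 * Real.pi), max 0 (r * Real.cos θ))
          = ∫ θ in (3 * Real.pi / 2)..(2 * Real.pi), r * Real.cos θ := by
        apply intervalIntegral.integral_congr
        intro x hx
        rw [Set.uIcc_of_le (by linarith)] at hx
        have hc : 0 ≤ Real.cos x := by
          rw [← Real.cos_sub_two_pi]
          exact Real.cos_nonneg_of_mem_Icc ⟨by linarith [hx.1], by linarith [hx.2]⟩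
        exact max_eq_right (mul_nonneg hr0 hc)
      rw [this, intervalIntegral.integral_const_mul, integral_cos]
      have h32 : Real.sin (3 * Real.pi / 2) = -1 := by
        have : (3 * Real.pi / 2) = Real.pi + Real.pi / 2 := by ring
        rw [this, Real.sin_add]
        simp
      rw [Real.sin_two_pi, h32]; ring
    have := intervalIntegral.integral_add_adjacent_intervals
      (hint 0 (Real.pi/2)) (hint (Real.pi/2) (3 * Real.pi / 2))
    have h2 := intervalIntegral.integral_add_adjacent_intervals
      (hint 0 (3 * Real.pi / 2)) (hint (3 * Real.pi / 2) (2 * Real.pi))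
    rw [hsplit1, hsplit2] at this
    rw [← h2, ← this, hsplit3]; ring
  -- express a cos θ + b sin θ = r cos (θ - φ)
  have hz : (Complex.mk a b) ≠ 0 := by
    intro h
    have ha : a = 0 := congrArg Complex.re h
    have hb : b = 0 := congrArg Complex.im h
    exact h0 (by rw [ha, hb]; ring)
  set z : ℂ := Complex.mk a b with hzdef
  have habs : ‖z‖ = r := by
    rw [Complex.norm_def, Complex.normSq_mk, hr]
    ring_nf
  have hcos : Real.cos z.arg = a / r := by
    rw [Complex.cos_arg hz, habs]
  have hsin : Real.sin z.arg = b / r := by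
    rw [Complex.sin_arg, habs]
  have hrne : r ≠ 0 := by
    intro h
    have := Real.sqrt_eq_zero (by positivity) |>.mp h
    exact h0 this
  have hform : ∀ θ : ℝ, a * Real.cos θ + b * Real.sin θ = r * Real.cos (θ - z.arg) := by
    intro θ
    rw [Real.cos_sub, hcos, hsin]
    field_simp
  calc (∫ θ in (0:ℝ)..(2 * Real.pi), max 0 (a * Real.cos θ + b * Real.sin θ))
      = ∫ θ in (0:ℝ)..(2 * Real.pi), max 0 (r * Real.cos (θ - z.arg)) := by
        apply intervalIntegral.integral_congr; intro x _; simp only [hform x]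
    _ = ∫ θ in (0 - z.arg)..(2 * Real.pi - z.arg), max 0 (r * Real.cos θ) :=
        intervalIntegral.integral_comp_sub_right (fun θ => max 0 (r * Real.cos θ)) z.arg
    _ = 2 * r := by
        have : (2 * Real.pi - z.arg) = (0 - z.arg) + 2 * Real.pi := by ring
        rw [this, key]




lemma perim_union_le {C₁ C₂ : Set Plane} (h₁ : C₁.Finite) (h₂ : C₂.Finite)
    (hn₁ : C₁.Nonempty) (hn₂ : C₂.Nonempty) {p₁ p₂ : Plane}
    (hp₁ : p₁ ∈ C₁) (hp₂ : p₂ ∈ C₂) :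
    perim (C₁ ∪ C₂) ≤ perim C₁ + perim C₂ + 2 * dist p₁ p₂ := by
  set a := p₂ 0 - p₁ 0 with ha
  set b := p₂ 1 - p₁ 1 with hb
  have hdist : dist p₁ p₂ = Real.sqrt (a ^ 2 + b ^ 2) := by
    rw [EuclideanSpace.dist_eq]
    simp only [Fin.sum_univ_two, Real.dist_eq, sq_abs]
    congr 1; rw [ha, hb]; ring
  have hpoint : ∀ θ : ℝ, supf (C₁ ∪ C₂) θ ≤
      (supf C₁ θ + supf C₂ θ - sf p₂ θ) + max 0 (a * Real.cos θ + b * Real.sin θ) := by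
    intro θ
    have hsup : supf (C₁ ∪ C₂) θ = supf C₁ θ ⊔ supf C₂ θ := by
      unfold supf
      rw [Set.image_union, csSup_union ((h₁.image _).bddAbove) (hn₁.image _)
        ((h₂.image _).bddAbove) (hn₂.image _)]
    have h1 := le_supf h₁ hp₁ θ
    have h2 := le_supf h₂ hp₂ θ
    have hsf : sf p₂ θ = sf p₁ θ + (a * Real.cos θ + b * Real.sin θ) := by
      unfold sf; rw [ha, hb]; ring
    have hmax : a * Real.cos θ + b * Real.sin θ ≤ max 0 (a * Real.cos θ + b * Real.sin θ) :=
      le_max_right _ _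
    have hmax0 : (0:ℝ) ≤ max 0 (a * Real.cos θ + b * Real.sin θ) := le_max_left _ _
    rw [hsup]
    apply sup_le <;> linarith
  have i1 : IntervalIntegrable (supf C₁) MeasureTheory.volume 0 (2 * Real.pi) :=
    (supf_continuous h₁ hn₁).intervalIntegrable _ _
  have i2 : IntervalIntegrable (supf C₂) MeasureTheory.volume 0 (2 * Real.pi) :=
    (supf_continuous h₂ hn₂).intervalIntegrable _ _
  have i3 : IntervalIntegrable (sf p₂) MeasureTheory.volume 0 (2 * Real.pi) :=
    (sf_cont p₂).intervalIntegrable _ _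
  have i4 : IntervalIntegrable (fun θ => max 0 (a * Real.cos θ + b * Real.sin θ))
      MeasureTheory.volume 0 (2 * Real.pi) :=
    ((continuous_const.max (by fun_prop)).intervalIntegrable _ _)
  have iu : IntervalIntegrable (supf (C₁ ∪ C₂)) MeasureTheory.volume 0 (2 * Real.pi) :=
    (supf_continuous (h₁.union h₂) (hn₁.mono Set.subset_union_left)).intervalIntegrable _ _
  have hmono := intervalIntegral.integral_mono_on (by positivity : (0:ℝ) ≤ 2 * Real.pi)
    iu (((i1.add i2).sub i3).add i4) (fun x _ => hpoint x)
  rw [perim_eq, perim_eq, perim_eq]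
  calc (∫ θ in (0:ℝ)..(2 * Real.pi), supf (C₁ ∪ C₂) θ)
      ≤ ∫ θ in (0:ℝ)..(2 * Real.pi),
          ((supf C₁ θ + supf C₂ θ - sf p₂ θ) + max 0 (a * Real.cos θ + b * Real.sin θ)) := hmono
    _ = (∫ θ in (0:ℝ)..(2 * Real.pi), supf C₁ θ) + (∫ θ in (0:ℝ)..(2 * Real.pi), supf C₂ θ)
          - (∫ θ in (0:ℝ)..(2 * Real.pi), sf p₂ θ)
          + ∫ θ in (0:ℝ)..(2 * Real.pi), max 0 (a * Real.cos θ + b * Real.sin θ) := by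
        rw [intervalIntegral.integral_add ((i1.add i2).sub i3) i4,
          intervalIntegral.integral_sub (i1.add i2) i3,
          intervalIntegral.integral_add i1 i2]
    _ = (∫ θ in (0:ℝ)..(2 * Real.pi), supf C₁ θ) + (∫ θ in (0:ℝ)..(2 * Real.pi), supf C₂ θ)
          + 2 * dist p₁ p₂ := by
        rw [integral_sf, integral_max_cos, hdist]; ring




lemma cluster_subset {A : Set Plane} {P : Finset (Set Plane)}
    (hP : ⋃₀ (P : Set (Set Plane)) = A) {C : Set Plane} (hC : C ∈ P) : C ⊆ A := by
  intro x hx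
  rw [← hP]
  exact ⟨C, hC, hx⟩


/-- two points at distance less than η/2 lie in the same cluster
of every optimal partition. -/
theorem close_points_same_cluster
    (A : Set Plane) (hA : A.Finite) (hAne : A.Nonempty) (η : ℝ) (hη : 0 < η)
    (p₁ p₂ : Plane) (hp₁ : p₁ ∈ A) (hp₂ : p₂ ∈ A)
    (hclose : dist p₁ p₂ < η / 2)
    (P : Finset (Set Plane)) (hP : IsOptimalPartition η A P) :
    ∃ C ∈ P, p₁ ∈ C ∧ p₂ ∈ C := by
  classical
  obtain ⟨⟨hPne, hPun, hPdisj⟩, hopt⟩ := hP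
  obtain ⟨C₁, hC₁P, hp₁C₁⟩ : ∃ C ∈ (P : Set (Set Plane)), p₁ ∈ C := by
    rw [← Set.mem_sUnion, hPun]; exact hp₁
  obtain ⟨C₂, hC₂P, hp₂C₂⟩ : ∃ C ∈ (P : Set (Set Plane)), p₂ ∈ C := by
    rw [← Set.mem_sUnion, hPun]; exact hp₂
  by_cases hne : C₁ = C₂
  · exact ⟨C₁, hC₁P, hp₁C₁, hne ▸ hp₂C₂⟩
  exfalso
  -- merged partition
  set R : Finset (Set Plane) := (P.erase C₁).erase C₂ with hR
  set Q : Finset (Set Plane) := insert (C₁ ∪ C₂) R with hQ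
  have hC₂mem : C₂ ∈ P.erase C₁ := Finset.mem_erase.mpr ⟨fun h => hne h.symm, hC₂P⟩
  have hRsub : ∀ D ∈ R, D ∈ P ∧ D ≠ C₁ ∧ D ≠ C₂ := by
    intro D hD
    rw [hR, Finset.mem_erase, Finset.mem_erase] at hD
    exact ⟨hD.2.2, hD.2.1, hD.1⟩
  have hnotmem : (C₁ ∪ C₂) ∉ R := by
    intro hmem
    obtain ⟨hDP, hD1, _⟩ := hRsub _ hmem
    have hdisj := hPdisj hC₁P hDP (fun h => hD1 h.symm)
    obtain ⟨x, hx⟩ := hPne C₁ hC₁P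
    exact Set.disjoint_left.mp hdisj hx (Set.mem_union_left _ hx)
  have hfin : ∀ C ∈ P, (C : Set Plane).Finite := fun C hC => hA.subset (cluster_subset hPun hC)
  -- Q is a partition of A
  have hQpart : IsPartition A Q := by
    refine ⟨?_, ?_, ?_⟩
    · intro C hC
      rw [hQ, Finset.mem_insert] at hC
      rcases hC with rfl | hC
      · exact (hPne C₁ hC₁P).mono Set.subset_union_left
      · exact hPne C ((hRsub C hC).1)
    · apply Set.Subset.antisymm
      · intro x hx
        obtain ⟨D, hD, hxD⟩ := hx
        rw [hQ] at hD
        simp only [Finset.coe_insert, Set.mem_insert_iff] at hD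
        rcases hD with rfl | hD
        · rcases hxD with h | h
          · exact cluster_subset hPun hC₁P h
          · exact cluster_subset hPun hC₂P h
        · exact cluster_subset hPun ((hRsub D hD).1) hxD
      · intro x hx
        rw [← hPun] at hx
        obtain ⟨D, hDP, hxD⟩ := hx
        by_cases h1 : D = C₁
        · exact ⟨C₁ ∪ C₂, by simp [hQ], Set.mem_union_left _ (h1 ▸ hxD)⟩
        by_cases h2 : D = C₂
        · exact ⟨C₁ ∪ C₂, by simp [hQ], Set.mem_union_right _ (h2 ▸ hxD)⟩
        · refine ⟨D, ?_, hxD⟩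
          simp only [hQ, Finset.coe_insert, Set.mem_insert_iff]
          right
          rw [hR]
          exact Finset.mem_erase.mpr ⟨h2, Finset.mem_erase.mpr ⟨h1, hDP⟩⟩
    · intro D hD E hE hDE
      simp only [hQ, Finset.coe_insert, Set.mem_insert_iff, Finset.mem_coe] at hD hE
      have hdisjR : ∀ F ∈ R, Disjoint (C₁ ∪ C₂) F := by
        intro F hF
        obtain ⟨hFP, hF1, hF2⟩ := hRsub F hF
        exact Disjoint.union_left (hPdisj hC₁P hFP (fun h => hF1 h.symm))
          (hPdisj hC₂P hFP (fun h => hF2 h.symm))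
      rcases hD with rfl | hD <;> rcases hE with rfl | hE
      · exact absurd rfl hDE
      · exact hdisjR E hE
      · exact (hdisjR D hD).symm
      · exact hPdisj ((hRsub D hD).1) ((hRsub E hE).1) hDE
  -- cardinality
  have hcard : Q.card + 1 = P.card := by
    rw [hQ, Finset.card_insert_of_notMem hnotmem, hR,
      Finset.card_erase_of_mem hC₂mem, Finset.card_erase_of_mem (Finset.mem_coe.mp hC₁P)]
    have h2le : 1 < P.card := Finset.one_lt_card.mpr ⟨C₁, Finset.mem_coe.mp hC₁P, C₂, Finset.mem_coe.mp hC₂P, hne⟩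
    omega
  -- sums
  have hsum : ∑ D ∈ Q, perim D = ∑ D ∈ P, perim D - perim C₁ - perim C₂ + perim (C₁ ∪ C₂) := by
    rw [hQ, Finset.sum_insert hnotmem, hR, Finset.sum_erase_eq_sub hC₂mem,
      Finset.sum_erase_eq_sub hC₁P]
    ring
  have hperim := perim_union_le (hfin C₁ hC₁P) (hfin C₂ hC₂P) (hPne C₁ hC₁P) (hPne C₂ hC₂P)
    hp₁C₁ hp₂C₂
  have hle := hopt Q hQpart
  have hcardR : (Q.card : ℝ) = (P.card : ℝ) - 1 := by
    have := hcard
    push_cast [← this]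
    ring
  rw [cost, cost, hsum, hcardR] at hle
  nlinarith [hle, hperim, hclose, hη]


end
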